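/- Let (A, m) be a strictly Henselian Noetherian local ring of characteristic p > 0 of dimension 1 which is a normal domain, let i be the inclusion of the closed point and j the inclusion of the punctured spectrum U. Then R^0Γ(Ri^! F_p) = R^1Γ(Ri^! F_p) = 0; equivalently, H^0_ét(Spec A, F_p) → H^0_ét(U, F_p) is an isomorphism and H^1_ét(Spec A, F_p) → H^1_ét(U, F_p) is injective. -/

import Mathlib

/-!
Statement 10: Let `(A, m)` be a strictly Henselian Noetherian local normal domain of
characteristic `p > 0` and dimension `1`, `i` the inclusion of the closed point and `j` the
inclusion of the punctured spectrum `U`.  Then `R⁰Γ(Ri^! 𝔽_p) = R¹Γ(Ri^! 𝔽_p) = 0`;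
equivalently (via the exact triangle `Ri_* Ri^! 𝔽_p → 𝔽_p → Rj_* 𝔽_p`):
`H⁰_ét(Spec A, 𝔽_p) → H⁰_ét(U, 𝔽_p)` is an isomorphism, and
`H¹_ét(Spec A, 𝔽_p) → H¹_ét(U, 𝔽_p)` is injective.

Encoding: `H⁰_ét(−, 𝔽_p)` is the group of locally constant `𝔽_p`-valued functions, so the
first claim is bijectivity of restriction of locally constant functions to `U`.  For the second
claim, by the Artin–Schreier sequence (`Spec A` affine, `A` strictly Henselian) injectivity of
`H¹_ét(Spec A, 𝔽_p) → H¹_ét(U, 𝔽_p)` is equivalent to: every `a ∈ A` of the form `x^p - x`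
with `x ∈ H⁰(U, O_U)` is of the form `y^p - y` with `y ∈ A`.
-/

open AlgebraicGeometry Opposite

set_option synthInstance.maxHeartbeats 1000000
set_option maxHeartbeats 1000000

/-- The punctured spectrum of a local ring: the complement of the closed point. -/
noncomputable def puncturedSpectrum (A : Type) [CommRing A] [IsLocalRing A] :
    TopologicalSpace.Opens (PrimeSpectrum A) :=
  ⟨{IsLocalRing.closedPoint A}ᶜ,
    ((PrimeSpectrum.isClosed_singleton_iff_isMaximal _).mpr
      (IsLocalRing.maximalIdeal.isMaximal A)).isOpen_compl⟩

section Aux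

variable (A : Type) [CommRing A] [IsLocalRing A] [IsDomain A]

/-- The generic point of `Spec A`. -/
noncomputable def genericPt : PrimeSpectrum A := ⟨⊥, Ideal.bot_prime⟩

lemma maximalIdeal_ne_bot (hdim : ringKrullDim A = 1) :
    IsLocalRing.maximalIdeal A ≠ ⊥ := by
  intro h
  haveI : Unique (PrimeSpectrum A) :=
    ⟨⟨IsLocalRing.closedPoint A⟩, fun q => PrimeSpectrum.ext (by
      show q.asIdeal = IsLocalRing.maximalIdeal A
      rw [h]
      exact le_bot_iff.mp (h ▸ IsLocalRing.le_maximalIdeal q.2.ne_top))⟩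
  have : ringKrullDim A = 0 := Order.krullDim_eq_zero_of_unique
  rw [this] at hdim
  exact absurd hdim (by decide)

lemma genericPt_mem_punctured (hdim : ringKrullDim A = 1) :
    genericPt A ∈ puncturedSpectrum A := by
  intro h
  simp only [Set.mem_singleton_iff] at h
  exact maximalIdeal_ne_bot A hdim
    (by simpa [genericPt, IsLocalRing.closedPoint] using congrArg PrimeSpectrum.asIdeal h.symm)

lemma eq_genericPt_of_mem_punctured (hdim : ringKrullDim A = 1)
    (q : PrimeSpectrum A) (hq : q ∈ puncturedSpectrum A) : q = genericPt A := by
  by_contra hne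
  have hqbot : q.asIdeal ≠ ⊥ := fun h => hne (PrimeSpectrum.ext h)
  have hqm : q.asIdeal ≠ IsLocalRing.maximalIdeal A := fun h =>
    hq (by simp only [Set.mem_singleton_iff]; exact PrimeSpectrum.ext h)
  have h1 : genericPt A < q := by
    show (genericPt A).asIdeal < q.asIdeal
    exact lt_of_le_of_ne bot_le (Ne.symm hqbot)
  have h2 : q < IsLocalRing.closedPoint A := by
    show q.asIdeal < IsLocalRing.maximalIdeal A
    exact lt_of_le_of_ne (IsLocalRing.le_maximalIdeal q.2.ne_top) hqm
  let c : LTSeries (PrimeSpectrum A) :=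
    ((RelSeries.singleton _ (IsLocalRing.closedPoint A)).cons q h2).cons (genericPt A) (by exact h1)
  have hc : (c.length : WithBot (WithTop ℕ)) ≤ Order.krullDim (PrimeSpectrum A) :=
    Order.LTSeries.length_le_krullDim c
  have hlen : c.length = 2 := rfl
  rw [hlen, show Order.krullDim (PrimeSpectrum A) = ringKrullDim A from rfl, hdim] at hc
  exact absurd (Nat.cast_le_one.mp hc) (by decide)

end Aux

theorem costalk_vanishing_of_strictlyHenselian_dim_one
    (p : ℕ) [Fact p.Prime] (A : Type) [CommRing A] [IsNoetherianRing A] [IsLocalRing A]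
    [HenselianLocalRing A] [IsSepClosed (IsLocalRing.ResidueField A)]
    [IsDomain A] [IsIntegrallyClosed A] [CharP A p]
    (hdim : ringKrullDim A = 1) :
    -- `H⁰_ét(Spec A, 𝔽_p) → H⁰_ét(U, 𝔽_p)` is an isomorphism, i.e. restriction of locally
    -- constant `𝔽_p`-valued functions to the punctured spectrum is bijective
    (Function.Bijective
      (fun g : LocallyConstant (PrimeSpectrum A) (ZMod p) =>
        g.comap ⟨Subtype.val, continuous_subtype_val⟩ :
          LocallyConstant (PrimeSpectrum A) (ZMod p) →
          LocallyConstant (puncturedSpectrum A) (ZMod p)))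
    -- `H¹_ét(Spec A, 𝔽_p) → H¹_ét(U, 𝔽_p)` is injective
    ∧ (∀ a : A,
        (∃ x : (Spec.structureSheaf A).1.obj (op (puncturedSpectrum A)),
            x ^ p - x = StructureSheaf.toOpen A (puncturedSpectrum A) a) →
        ∃ y : A, y ^ p - y = a) := by
  have hpt := genericPt_mem_punctured A hdim
  constructor
  · constructor
    · -- injectivity
      intro g₁ g₂ h
      ext q
      have h1 : g₁ (genericPt A) = g₂ (genericPt A) := by
        have h' := congrArg
          (fun f : LocallyConstant (puncturedSpectrum A) (ZMod p) => f ⟨genericPt A, hpt⟩) h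
        simpa [LocallyConstant.coe_comap] using h'
      have e1 : g₁ q = g₁ (genericPt A) :=
        g₁.2.apply_eq_of_preconnectedSpace q (genericPt A)
      have e2 : g₂ q = g₂ (genericPt A) :=
        g₂.2.apply_eq_of_preconnectedSpace q (genericPt A)
      rw [e1, e2, h1]
    · -- surjectivity
      intro h
      refine ⟨LocallyConstant.const _ (h ⟨genericPt A, hpt⟩), ?_⟩
      ext ⟨q, hq⟩
      have : (⟨q, hq⟩ : (puncturedSpectrum A : Set _)) = ⟨genericPt A, hpt⟩ :=
        Subtype.ext (eq_genericPt_of_mem_punctured A hdim q hq)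
      simp [LocallyConstant.coe_comap, this]
  · -- Artin–Schreier extension across the puncture
    intro a ⟨x, hx⟩
    -- pass to the stalk at the generic point, i.e. the fraction field `Localization.AtPrime ⊥`
    set K := Localization.AtPrime (genericPt A).asIdeal with hK
    have hfr : IsFractionRing A K := by
      have he : (genericPt A).asIdeal.primeCompl = nonZeroDivisors A := by
        ext z
        simp [Ideal.primeCompl, genericPt, mem_nonZeroDivisors_iff_ne_zero]
      unfold IsFractionRing
      rw [← he]
      infer_instance
    let germMap : (Spec.structureSheaf A).1.obj (op (puncturedSpectrum A)) →+* K :=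
      ((IsLocalization.algEquiv (genericPt A).asIdeal.primeCompl
        ((Spec.structureSheaf A).presheaf.stalk (genericPt A)) K).toAlgHom.toRingHom).comp
        ((Spec.structureSheaf A).presheaf.germ (puncturedSpectrum A) (genericPt A) hpt).hom
    set z : K := germMap x with hz
    have hzeq : z ^ p - z = algebraMap A K a := by
      rw [hz, ← map_pow, ← map_sub, hx]
      show (IsLocalization.algEquiv (genericPt A).asIdeal.primeCompl
        ((Spec.structureSheaf A).presheaf.stalk (genericPt A)) K)
        (((Spec.structureSheaf A).presheaf.germ (puncturedSpectrum A) (genericPt A) hpt)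
          (StructureSheaf.toOpen A (puncturedSpectrum A) a)) = _
      rw [show ((Spec.structureSheaf A).presheaf.germ (puncturedSpectrum A) (genericPt A) hpt)
          (StructureSheaf.toOpen A (puncturedSpectrum A) a) =
          algebraMap A ((Spec.structureSheaf A).presheaf.stalk (genericPt A)) a from
        StructureSheaf.algebraMap_germ_apply _ _ hpt a]
      exact (IsLocalization.algEquiv (genericPt A).asIdeal.primeCompl
        ((Spec.structureSheaf A).presheaf.stalk (genericPt A)) K).commutes a
    -- `z` is integral over `A` via `X^p - X - a`
    have hint : IsIntegral A z := by
      refine ⟨Polynomial.X ^ p - (Polynomial.X + Polynomial.C a), ?_, ?_⟩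
      · apply Polynomial.monic_X_pow_sub
        rw [Polynomial.degree_X_add_C a]
        exact_mod_cast (Fact.out : p.Prime).one_lt
      · rw [Polynomial.eval₂_sub, Polynomial.eval₂_add, Polynomial.eval₂_X_pow,
          Polynomial.eval₂_X, Polynomial.eval₂_C, ← sub_sub, hzeq, sub_self]
    obtain ⟨y, hy⟩ := IsIntegrallyClosed.isIntegral_iff.mp hint
    refine ⟨y, ?_⟩
    have hinj : Function.Injective (algebraMap A K) := IsFractionRing.injective A K
    apply hinj
    rw [map_sub, map_pow, hy, hzeq]
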